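/- Let U be a finite set and ρ : 2^{U^±} → ℝ ∪ {+∞} a t-monotone submodular function. Then the function β : 3^U → ℝ ∪ {+∞} defined by β(Y,Z) := ρ(Y^+ ∪ Z^−) is bisubmodular. -/

import Mathlib

open Finset

/-- `Y⁺ = {i⁺ : i ∈ Y}` in the signed extension `U^± = U × Bool` (`true` = `+`). -/
def posPart {U : Type*} [DecidableEq U] (Y : Finset U) : Finset (U × Bool) :=
  Y.image (fun i => (i, true))

/-- `Z⁻ = {i⁻ : i ∈ Z}`. -/
def negPart {U : Type*} [DecidableEq U] (Z : Finset U) : Finset (U × Bool) :=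
  Z.image (fun i => (i, false))

/-- `X̲`: remove from `X ⊆ U^±` all pairs `{i⁺, i⁻} ⊆ X`. -/
def reduceSigned {U : Type*} [DecidableEq U] (X : Finset (U × Bool)) :
    Finset (U × Bool) :=
  X.filter (fun p => ¬((p.1, true) ∈ X ∧ (p.1, false) ∈ X))

/-- A function on `2^{U^±}` is transversally monotone (t-monotone) if
`ρ(X̲) ≤ ρ(X)` for all `X`. -/
def TMono {U : Type*} [DecidableEq U] (ρ : Finset (U × Bool) → EReal) : Prop :=
  ∀ X : Finset (U × Bool), ρ (reduceSigned X) ≤ ρ X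

/-- Submodularity (with `ρ ∅ = 0`) for `ρ : 2^{U^±} → ℝ ∪ {+∞}`. -/
def Submodular {U : Type*} [DecidableEq U] (ρ : Finset U → EReal) : Prop :=
  ρ ∅ = 0 ∧ ∀ X Y : Finset U, ρ (X ∩ Y) + ρ (X ∪ Y) ≤ ρ X + ρ Y

/-- Bisubmodularity of `β : 3^U → ℝ ∪ {+∞}`. -/
def Bisubmodular {U : Type*} [DecidableEq U] (β : Finset U → Finset U → EReal) : Prop :=
  β ∅ ∅ = 0 ∧ ∀ Y Z Y' Z' : Finset U, Disjoint Y Z → Disjoint Y' Z' →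
    β (Y ∩ Y') (Z ∩ Z') + β ((Y ∪ Y') \ (Z ∪ Z')) ((Z ∪ Z') \ (Y ∪ Y')) ≤ β Y Z + β Y' Z'

/-- If `ρ` is a t-monotone submodular function on `2^{U^±}`, then
`β(Y,Z) := ρ(Y⁺ ∪ Z⁻)` is bisubmodular on `3^U`. -/

lemma mem_posPart {U : Type*} [DecidableEq U] (Y : Finset U) (p : U × Bool) :
    p ∈ posPart Y ↔ p.1 ∈ Y ∧ p.2 = true := by
  cases p with
  | mk i b => simp only [_root_.posPart, Finset.mem_image, Prod.mk.injEq]; aesop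

lemma mem_negPart {U : Type*} [DecidableEq U] (Z : Finset U) (p : U × Bool) :
    p ∈ negPart Z ↔ p.1 ∈ Z ∧ p.2 = false := by
  cases p with
  | mk i b => simp only [_root_.negPart, Finset.mem_image, Prod.mk.injEq]; aesop

lemma inter_key {U : Type*} [DecidableEq U] (Y Z Y' Z' : Finset U) :
    (posPart Y ∪ negPart Z) ∩ (posPart Y' ∪ negPart Z')
      = posPart (Y ∩ Y') ∪ negPart (Z ∩ Z') := by
  ext ⟨i, b⟩
  simp only [Finset.mem_inter, Finset.mem_union, mem_posPart, mem_negPart]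
  cases b <;> simp <;> tauto

lemma reduce_key {U : Type*} [DecidableEq U] (P Q : Finset U) :
    reduceSigned (posPart P ∪ negPart Q) = posPart (P \ Q) ∪ negPart (Q \ P) := by
  ext ⟨i, b⟩
  simp only [reduceSigned, Finset.mem_filter, Finset.mem_union, mem_posPart, mem_negPart,
    Finset.mem_sdiff]
  cases b <;> simp <;> tauto

theorem bisubmodular_of_tmono_submodular
    {U : Type*} [Fintype U] [DecidableEq U]
    (ρ : Finset (U × Bool) → EReal) (hsub : Submodular ρ) (hmono : TMono ρ) :
    Bisubmodular (fun Y Z : Finset U => ρ (posPart Y ∪ negPart Z)) := by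
  constructor
  · simpa [_root_.posPart, _root_.negPart] using hsub.1
  · intro Y Z Y' Z' _ _
    have h := hsub.2 (posPart Y ∪ negPart Z) (posPart Y' ∪ negPart Z')
    have hm := hmono ((posPart Y ∪ negPart Z) ∪ (posPart Y' ∪ negPart Z'))
    have hu : (posPart Y ∪ negPart Z) ∪ (posPart Y' ∪ negPart Z')
        = posPart (Y ∪ Y') ∪ negPart (Z ∪ Z') := by
      ext ⟨i, b⟩
      simp only [Finset.mem_union, mem_posPart, mem_negPart]
      tauto
    rw [inter_key] at h
    rw [hu, reduce_key] at hm
    rw [hu] at h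
    exact le_trans (add_le_add_right hm _) h
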